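/- Let X, S, N be independent zero-mean Gaussians with variances P'', Q, 1, and let Y = X + λS + N for real λ. Set U = X + αS with α = λP''/(P''+1). Then I(U; Y) − I(U; S) = (1/2)log(1+P''). -/

import Mathlib

/-- Mutual information of two jointly Gaussian (zero-mean) real variables with variances
`vA`, `vB` and covariance `c` (logarithm base 2). -/
noncomputable def gaussMI (vA vB c : ℝ) : ℝ :=
  (1 / 2) * Real.logb 2 (vA * vB / (vA * vB - c ^ 2))

/-- generalized Costa with scaled state: for independent zero-mean Gaussians
`X, S, N` with variances `P'', Q, 1`, `Y = X + λS + N`, `U = X + αS` with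
`α = λP''/(P''+1)`, one has `I(U;Y) - I(U;S) = (1/2)log(1+P'')`. -/
theorem stmt10 (P'' Q lam : ℝ) (hP : 0 < P'') (hQ : 0 < Q) :
    let α := lam * P'' / (P'' + 1)
    gaussMI (P'' + α ^ 2 * Q) (P'' + lam ^ 2 * Q + 1) (P'' + α * lam * Q)
      - gaussMI (P'' + α ^ 2 * Q) Q (α * Q)
      = (1 / 2) * Real.logb 2 (1 + P'') := by
  intro α
  have hα : α = lam * P'' / (P'' + 1) := rfl
  have hP1 : P'' + 1 ≠ 0 := by positivity
  have hvA : 0 < P'' + α ^ 2 * Q := by positivity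
  have hD1 : (P'' + α ^ 2 * Q) * (P'' + lam ^ 2 * Q + 1) - (P'' + α * lam * Q) ^ 2
      = (P'' + α ^ 2 * Q) + P'' * Q * (lam - α) ^ 2 := by ring
  have hD1pos : 0 < (P'' + α ^ 2 * Q) * (P'' + lam ^ 2 * Q + 1) - (P'' + α * lam * Q) ^ 2 := by
    rw [hD1]; positivity
  have hD2 : (P'' + α ^ 2 * Q) * Q - (α * Q) ^ 2 = P'' * Q := by ring
  have hkey : (P'' + lam ^ 2 * Q + 1) * P''
      = (1 + P'') * ((P'' + α ^ 2 * Q) + P'' * Q * (lam - α) ^ 2) := by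
    rw [hα]; field_simp; ring
  have hA : (P'' + α ^ 2 * Q) * (P'' + lam ^ 2 * Q + 1)
        / ((P'' + α ^ 2 * Q) * (P'' + lam ^ 2 * Q + 1) - (P'' + α * lam * Q) ^ 2)
      = (1 + P'') * ((P'' + α ^ 2 * Q) * Q / ((P'' + α ^ 2 * Q) * Q - (α * Q) ^ 2)) := by
    rw [hD1, hD2]
    have h1 : ((P'' + α ^ 2 * Q) + P'' * Q * (lam - α) ^ 2) ≠ 0 := by positivity
    have h2 : P'' * Q ≠ 0 := by positivity
    rw [mul_div_assoc', div_eq_div_iff h1 h2]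
    linear_combination (P'' + α ^ 2 * Q) * Q * hkey
  have hBpos : 0 < (P'' + α ^ 2 * Q) * Q / ((P'' + α ^ 2 * Q) * Q - (α * Q) ^ 2) := by
    rw [hD2]; positivity
  have h1P : (0:ℝ) < 1 + P'' := by linarith
  unfold gaussMI
  rw [hA, Real.logb_mul (ne_of_gt h1P) (ne_of_gt hBpos)]
  ring
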